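/- Let (X, H) be a hypergraph on n vertices in which no line consists of all n vertices, and suppose the hypergraph has exactly m distinct lines. For each vertex x, let S_x be the set of all lines that include x. Then the sets S_x (x ∈ X) are n pairwise distinct sets forming an antichain (none of them is a subset of another), and consequently n ≤ C(m, ⌊m/2⌋). -/

import Mathlib

open Finset

/-- The line determined by two vertices `u`, `v` in a hypergraph with edge set `H`:
`{u, v} ∪ {p : ∃ T ∈ H, {u, v, p} ⊆ T}`. -/
def hline {V : Type*} [Fintype V] [DecidableEq V] (H : Finset (Finset V)) (u v : V) :
    Finset V :=
  {u, v} ∪ Finset.univ.filter (fun p => ∃ T ∈ H, ({u, v, p} : Finset V) ⊆ T)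

/-- The set of all lines of a hypergraph. -/
def hlines {V : Type*} [Fintype V] [DecidableEq V] (H : Finset (Finset V)) :
    Finset (Finset V) :=
  ((Finset.univ ×ˢ Finset.univ).filter (fun p : V × V => p.1 ≠ p.2)).image
    (fun p => hline H p.1 p.2)

lemma hline_mem_left {V : Type*} [Fintype V] [DecidableEq V] (H : Finset (Finset V))
    (u v : V) : u ∈ hline H u v := by
  simp [hline]

lemma sep_lemma {V : Type*} [Fintype V] [DecidableEq V] (H : Finset (Finset V))
    (hno : ∀ u v : V, u ≠ v → hline H u v ≠ Finset.univ)
    {x y : V} (hxy : x ≠ y) : ∃ L ∈ hlines H, x ∈ L ∧ y ∉ L := by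
  have hne := hno x y hxy
  obtain ⟨z, hz⟩ : ∃ z, z ∉ hline H x y := by
    by_contra h
    push_neg at h
    exact hne (Finset.eq_univ_iff_forall.2 h)
  have hzx : z ≠ x := fun h => hz (h ▸ by simp [hline])
  have hzy : z ≠ y := fun h => hz (h ▸ by simp [hline])
  refine ⟨hline H x z, ?_, hline_mem_left H x z, ?_⟩
  · exact Finset.mem_image.2 ⟨(x, z), by simp [hzx.symm], rfl⟩
  · intro hy
    simp only [hline, Finset.mem_union, Finset.mem_insert, Finset.mem_singleton,
      Finset.mem_filter, Finset.mem_univ, true_and] at hy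
    rcases hy with (rfl | rfl) | ⟨T, hT, hsub⟩
    · exact hxy rfl
    · exact hzy rfl
    · apply hz
      simp only [hline, Finset.mem_union, Finset.mem_filter, Finset.mem_univ, true_and]
      right
      refine ⟨T, hT, ?_⟩
      intro a ha
      apply hsub
      simp only [Finset.mem_insert, Finset.mem_singleton] at ha ⊢
      tauto

theorem stmt_4 {V : Type*} [Fintype V] [DecidableEq V] (H : Finset (Finset V))
    (n m : ℕ) (hn : Fintype.card V = n)
    (hno : ∀ u v : V, u ≠ v → hline H u v ≠ Finset.univ)
    (hm : (hlines H).card = m)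
    (S : V → Finset (Finset V))
    (hS : ∀ x : V, S x = (hlines H).filter (fun L => x ∈ L)) :
    (∀ x y : V, x ≠ y → S x ≠ S y) ∧
    (∀ x y : V, x ≠ y → ¬ S x ⊆ S y) ∧
    n ≤ m.choose (m / 2) := by
  have hsubset : ∀ x y : V, x ≠ y → ¬ S x ⊆ S y := by
    intro x y hxy hsub
    obtain ⟨L, hL, hxL, hyL⟩ := sep_lemma H hno hxy
    have : L ∈ S y := hsub (by rw [hS]; exact Finset.mem_filter.2 ⟨hL, hxL⟩)
    rw [hS] at this
    exact hyL (Finset.mem_filter.1 this).2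
  refine ⟨fun x y hxy h => hsubset x y hxy (h ▸ Finset.Subset.refl _), hsubset, ?_⟩
  -- Sperner
  set α := {L // L ∈ hlines H}
  set S' : V → Finset α := fun x => (hlines H).attach.filter (fun L => x ∈ L.1) with hS'
  have hsubset' : ∀ x y : V, x ≠ y → ¬ S' x ⊆ S' y := by
    intro x y hxy hsub
    obtain ⟨L, hL, hxL, hyL⟩ := sep_lemma H hno hxy
    have : (⟨L, hL⟩ : α) ∈ S' y :=
      hsub (Finset.mem_filter.2 ⟨Finset.mem_attach _ _, hxL⟩)
    exact hyL (Finset.mem_filter.1 this).2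
  have hinj : Function.Injective S' := by
    intro x y h
    by_contra hxy
    exact hsubset' x y hxy (h ▸ Finset.Subset.refl _)
  set ℱ : Finset (Finset α) := Finset.univ.image S' with hℱ
  have hanti : IsAntichain (· ⊆ ·) (ℱ : Set (Finset α)) := by
    intro A hA B hB hne hsub
    simp only [hℱ, Finset.coe_image, Finset.coe_univ, Set.image_univ,
      Set.mem_range] at hA hB
    obtain ⟨x, rfl⟩ := hA
    obtain ⟨y, rfl⟩ := hB
    exact hsubset' x y (fun h => hne (by rw [h])) hsub
  have hcard : ℱ.card = n := by
    rw [hℱ, Finset.card_image_of_injective _ hinj, Finset.card_univ, hn]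
  have hcardα : Fintype.card α = m := by
    rw [Fintype.card_coe, hm]
  have := IsAntichain.sperner hanti
  rwa [hcard, hcardα] at this
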